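/- Let G be a finite bipartite graph with left vertex set U of size m ≥ 1 and right vertex set V of size n ≥ 1, with no isolated vertices, and let k be an odd positive integer. Then the number |𝒫_k| of walks of length k in G (where edges may be repeated) satisfies |𝒫_k| ≥ |E(G)|^k / (mn)^{(k-1)/2}. -/

import Mathlib

/-- The bipartite graph on `U ⊕ V` determined by the relation `R : U → V → Prop`:
a left vertex `u` is adjacent to a right vertex `v` iff `R u v`, and there are no
edges within `U` or within `V`. -/
def bipGraph {U V : Type*} (R : U → V → Prop) : SimpleGraph (U ⊕ V) where
  Adj x y :=
    Sum.elim (fun u => Sum.elim (fun _ => False) (fun v => R u v))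
      (fun v => Sum.elim (fun u => R u v) (fun _ => False)) x y
  symm := ⟨by rintro (u | v) (u' | v') h <;> simp_all⟩
  loopless := ⟨by rintro (u | v) h <;> exact h⟩

/-- The degree of the left vertex `u`. -/
def degL {U V : Type*} [Fintype V] (R : U → V → Prop) [∀ u v, Decidable (R u v)] (u : U) : ℕ :=
  (Finset.univ.filter fun v => R u v).card

/-- The degree of the right vertex `v`. -/
def degR {U V : Type*} [Fintype U] (R : U → V → Prop) [∀ u v, Decidable (R u v)] (v : V) : ℕ :=
  (Finset.univ.filter fun u => R u v).card

/-- The number of edges of the bipartite graph. -/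
def edgeCount {U V : Type*} [Fintype U] [Fintype V] (R : U → V → Prop)
    [∀ u v, Decidable (R u v)] : ℕ :=
  (Finset.univ.filter fun p : U × V => R p.1 p.2).card

/-- The number of walks of length `k` in the bipartite graph (sequences of `k + 1`
vertices, each adjacent to the next; vertices and edges may be repeated). -/
noncomputable def walkCount {U V : Type*} [Fintype U] [Fintype V]
    (R : U → V → Prop) (k : ℕ) : ℕ :=
  ∑ x : U ⊕ V, ∑ y : U ⊕ V, Nat.card {w : (bipGraph R).Walk x y // w.length = k}

/-- The Shannon entropy (in nats) of a probability mass function `p` on a finite set,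
with the convention `0 · log 0 = 0` (automatic in Lean since `Real.log 0 = 0`). -/
noncomputable def entPMF {α : Type*} [Fintype α] (p : α → ℝ) : ℝ :=
  -∑ a, p a * Real.log (p a)

/-! ### Auxiliary material for the proof -/

open Finset

section Aux

variable {U V : Type*} [Fintype U] [Fintype V]

instance bipAdjDecidable (R : U → V → Prop) [∀ u v, Decidable (R u v)] :
    DecidableRel (bipGraph R).Adj := fun x y =>
  match x, y with
  | Sum.inl _, Sum.inl _ => Decidable.isFalse fun h => h
  | Sum.inl u, Sum.inr v => inferInstanceAs (Decidable (R u v))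
  | Sum.inr v, Sum.inl u => inferInstanceAs (Decidable (R u v))
  | Sum.inr _, Sum.inr _ => Decidable.isFalse fun h => h

/-- `gW R j v` = number of walks `u₀ v₀ u₁ v₁ ⋯ u_j v_j` of length `2j+1`
starting in `U` and ending at the right vertex `v_j = v`. -/
def gW (R : U → V → Prop) [∀ u v, Decidable (R u v)] : ℕ → V → ℕ
  | 0, v => degR R v
  | j+1, v => ∑ u ∈ Finset.univ.filter (fun u => R u v),
      ∑ v' ∈ Finset.univ.filter (fun v' => R u v'), gW R j v'

variable (R : U → V → Prop) [∀ u v, Decidable (R u v)]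

lemma one_le_gW (hisoR : ∀ v : V, ∃ u : U, R u v) : ∀ j v, 1 ≤ gW R j v := by
  intro j
  induction j with
  | zero =>
    intro v
    obtain ⟨u, hu⟩ := hisoR v
    exact Finset.card_pos.2 ⟨u, by simp [hu]⟩
  | succ j ih =>
    intro v
    obtain ⟨u, hu⟩ := hisoR v
    calc (1 : ℕ) ≤ gW R j v := ih v
    _ ≤ ∑ v' ∈ Finset.univ.filter (fun v' => R u v'), gW R j v' :=
        Finset.single_le_sum (fun _ _ => Nat.zero_le _) (by simp [hu])
    _ ≤ gW R (j+1) v :=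
        Finset.single_le_sum (f := fun u => ∑ v' ∈ Finset.univ.filter (fun v' => R u v'), gW R j v')
          (fun _ _ => Nat.zero_le _) (by simp [hu])

lemma sum_degL : ∑ u, degL R u = edgeCount R := by
  unfold degL edgeCount
  rw [← Finset.univ_product_univ, Finset.card_filter, Finset.sum_product]
  exact Finset.sum_congr rfl fun u _ => by rw [Finset.card_filter]

lemma sum_degR : ∑ v, degR R v = edgeCount R := by
  unfold degR edgeCount
  rw [← Finset.univ_product_univ, Finset.card_filter, Finset.sum_product]
  rw [Finset.sum_comm]
  exact Finset.sum_congr rfl fun v _ => by rw [Finset.card_filter]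

lemma swapU (F : U → ℝ) :
    ∑ v, ∑ u ∈ Finset.univ.filter (fun u => R u v), F u = ∑ u, (degL R u : ℝ) * F u := by
  simp only [Finset.sum_filter]
  rw [Finset.sum_comm]
  refine Finset.sum_congr rfl fun u _ => ?_
  rw [← Finset.sum_filter, Finset.sum_const, nsmul_eq_mul, degL]

lemma swapV (F : V → ℝ) :
    ∑ u, ∑ v ∈ Finset.univ.filter (fun v => R u v), F v = ∑ v, (degR R v : ℝ) * F v := by
  simp only [Finset.sum_filter]
  rw [Finset.sum_comm]
  refine Finset.sum_congr rfl fun v _ => ?_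
  rw [← Finset.sum_filter, Finset.sum_const, nsmul_eq_mul, degR]

/-- Jensen's inequality for the (concave) logarithm, with unnormalized weights. -/
lemma jensen_log {ι : Type*} (t : Finset ι) (w x : ι → ℝ)
    (hw : ∀ i ∈ t, 0 ≤ w i) (hx : ∀ i ∈ t, 0 < x i) (hs : 0 < ∑ i ∈ t, w i) :
    ∑ i ∈ t, w i * Real.log (x i)
      ≤ (∑ i ∈ t, w i) * Real.log ((∑ i ∈ t, w i * x i) / ∑ i ∈ t, w i) := by
  set S := ∑ i ∈ t, w i with hS
  have hS0 : S ≠ 0 := hs.ne'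
  have h1 : ∑ i ∈ t, w i / S = 1 := by
    rw [← Finset.sum_div, ← hS, div_self hS0]
  have hj := (strictConcaveOn_log_Ioi.concaveOn).le_map_sum
    (t := t) (w := fun i => w i / S) (p := x)
    (fun i hi => div_nonneg (hw i hi) hs.le) h1 (fun i hi => hx i hi)
  simp only [smul_eq_mul] at hj
  have h2 : ∑ i ∈ t, w i / S * x i = (∑ i ∈ t, w i * x i) / S := by
    rw [Finset.sum_div]
    exact Finset.sum_congr rfl fun i _ => by ring
  have h3 : ∑ i ∈ t, w i * Real.log (x i) = S * ∑ i ∈ t, w i / S * Real.log (x i) := by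
    rw [Finset.mul_sum]
    refine Finset.sum_congr rfl fun i _ => ?_
    field_simp
  rw [h3, ← h2]
  exact mul_le_mul_of_nonneg_left hj hs.le

/-- Jensen: the sum of logs is at most size times log of the average. -/
lemma sum_log_le {ι : Type*} (t : Finset ι) (x : ι → ℝ) (hx : ∀ i ∈ t, 0 < x i)
    (ht : t.Nonempty) :
    ∑ i ∈ t, Real.log (x i)
      ≤ (t.card : ℝ) * Real.log (∑ i ∈ t, x i) - (t.card : ℝ) * Real.log (t.card) := by
  have hcard : (0 : ℝ) < t.card := by exact_mod_cast Finset.card_pos.2 ht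
  have h := jensen_log t (fun _ => 1) x (fun _ _ => zero_le_one) hx
    (by simp only [Finset.sum_const, nsmul_eq_mul, mul_one]; exact hcard)
  simp only [one_mul, Finset.sum_const, nsmul_eq_mul, mul_one] at h
  have hsum : 0 < ∑ i ∈ t, x i :=
    Finset.sum_pos hx ht
  rwa [Real.log_div hsum.ne' hcard.ne', mul_sub] at h

/-- Jensen: `∑ w log w ≥ S log S - S log N`. -/
lemma sum_mul_log_self {ι : Type*} [Fintype ι] (w : ι → ℝ) (hw : ∀ i, 0 < w i)
    (hE : 0 < ∑ i, w i) :
    (∑ i, w i) * Real.log (∑ i, w i) - (∑ i, w i) * Real.log (Fintype.card ι)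
      ≤ ∑ i, w i * Real.log (w i) := by
  have hcard : (0 : ℝ) < Fintype.card ι := by
    have : Nonempty ι := by
      by_contra h
      simp only [not_nonempty_iff] at h
      simp [Finset.univ_eq_empty] at hE
    exact_mod_cast Fintype.card_pos
  have h := jensen_log Finset.univ w (fun i => (w i)⁻¹) (fun i _ => (hw i).le)
    (fun i _ => inv_pos.2 (hw i)) hE
  have h2 : ∑ i, w i * (w i)⁻¹ = (Fintype.card ι : ℝ) := by
    rw [Finset.sum_congr rfl fun i _ => mul_inv_cancel₀ (hw i).ne']
    simp [Finset.card_univ]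
  rw [h2] at h
  have h3 : ∑ i, w i * Real.log (w i)⁻¹ = -∑ i, w i * Real.log (w i) := by
    rw [← Finset.sum_neg_distrib]
    exact Finset.sum_congr rfl fun i _ => by rw [Real.log_inv]; ring
  rw [h3, Real.log_div hcard.ne' hE.ne'] at h
  nlinarith [h]

end Aux

section Count

variable {U V : Type*} [Fintype U] [Fintype V] (R : U → V → Prop) [∀ u v, Decidable (R u v)]

set_option linter.unusedSectionVars false in
lemma bip_adj_inl_inr (u : U) (v : V) : (bipGraph R).Adj (Sum.inl u) (Sum.inr v) = R u v := rfl

set_option linter.unusedSectionVars false in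
lemma bip_adj_inr_inl (u : U) (v : V) : (bipGraph R).Adj (Sum.inr v) (Sum.inl u) = R u v := rfl

set_option linter.unusedSectionVars false in
lemma bip_adj_inl_inl (u u' : U) : (bipGraph R).Adj (Sum.inl u) (Sum.inl u') = False := rfl

set_option linter.unusedSectionVars false in
lemma bip_adj_inr_inr (v v' : V) : (bipGraph R).Adj (Sum.inr v) (Sum.inr v') = False := rfl

lemma sum_gW_le_walkCount (j : ℕ) : ∑ v, gW R j v ≤ walkCount R (2*j+1) := by
  classical
  set G := bipGraph R with hG
  set A := G.adjMatrix ℕ with hA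
  have hwc : ∀ k, walkCount R k = ∑ y : U ⊕ V, ∑ x : U ⊕ V, (A ^ k) x y := by
    intro k
    rw [walkCount, Finset.sum_comm]
    refine Finset.sum_congr rfl fun y _ => Finset.sum_congr rfl fun x _ => ?_
    rw [SimpleGraph.adjMatrix_pow_apply_eq_card_walk]
    exact Nat.card_eq_fintype_card
  have hb0 : ∀ y : U ⊕ V, (∑ x : U ⊕ V, (A ^ 0) x y) = 1 := by
    intro y
    simp [Matrix.one_apply]
  have hbs : ∀ (t : ℕ) (y : U ⊕ V),
      (∑ x, (A ^ (t+1)) x y) = ∑ z, if G.Adj z y then (∑ x, (A ^ t) x z) else 0 := by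
    intro t y
    simp only [pow_succ, Matrix.mul_apply]
    rw [Finset.sum_comm]
    refine Finset.sum_congr rfl fun z _ => ?_
    rw [← Finset.sum_mul, hA, SimpleGraph.adjMatrix_apply]
    split <;> simp
  have hmain : ∀ j (v : V), (∑ x, (A ^ (2*j+1)) x (Sum.inr v)) = gW R j v := by
    intro j
    induction j with
    | zero =>
      intro v
      have e0 : 2*0+1 = 0+1 := rfl
      rw [e0, hbs 0 (Sum.inr v), Fintype.sum_sum_type]
      simp only [hb0, hG, bip_adj_inl_inr, bip_adj_inr_inr, if_false]
      rw [Finset.sum_const, smul_zero, add_zero]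
      show _ = degR R v
      rw [degR, Finset.card_filter]
    | succ j ih =>
      intro v
      have e1 : 2*(j+1)+1 = (2*j+1) + 1 + 1 := by ring
      rw [e1, hbs, Fintype.sum_sum_type]
      simp only [hG, bip_adj_inl_inr, bip_adj_inr_inr, if_false]
      rw [Finset.sum_const, smul_zero, add_zero]
      have hinner : ∀ u : U, (∑ x, (A ^ ((2*j+1)+1)) x (Sum.inl u))
          = ∑ v' ∈ Finset.univ.filter (fun v' => R u v'), gW R j v' := by
        intro u
        rw [hbs, Fintype.sum_sum_type]
        simp only [hG, bip_adj_inr_inl, bip_adj_inl_inl, if_false]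
        rw [Finset.sum_const, smul_zero, zero_add]
        rw [Finset.sum_filter]
        exact Finset.sum_congr rfl fun v' _ => by rw [ih v']
      show (∑ u, if R u v then (∑ x, (A ^ ((2*j+1)+1)) x (Sum.inl u)) else 0) = gW R (j+1) v
      rw [show gW R (j+1) v = ∑ u ∈ Finset.univ.filter (fun u => R u v),
            ∑ v' ∈ Finset.univ.filter (fun v' => R u v'), gW R j v' from rfl]
      rw [Finset.sum_filter]
      exact Finset.sum_congr rfl fun u _ => by
        by_cases h : R u v <;> simp [h, hinner u]
  rw [hwc, Fintype.sum_sum_type]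
  calc ∑ v, gW R j v = ∑ v, (∑ x, (A ^ (2*j+1)) x (Sum.inr v)) :=
        (Finset.sum_congr rfl fun v _ => (hmain j v).symm)
  _ ≤ _ := Nat.le_add_left _ _

end Count

section Entropy

variable {U V : Type*} [Fintype U] [Fintype V] (R : U → V → Prop) [∀ u v, Decidable (R u v)]

lemma degR_pos (hisoR : ∀ v : V, ∃ u : U, R u v) (v : V) : 0 < degR R v := by
  obtain ⟨u, hu⟩ := hisoR v
  exact Finset.card_pos.2 ⟨u, by simp [hu]⟩

lemma degL_pos (hisoL : ∀ u : U, ∃ v : V, R u v) (u : U) : 0 < degL R u := by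
  obtain ⟨v, hv⟩ := hisoL u
  exact Finset.card_pos.2 ⟨v, by simp [hv]⟩

lemma gW_cast_succ (j : ℕ) (v : V) :
    (gW R (j+1) v : ℝ) = ∑ u ∈ Finset.univ.filter (fun u => R u v),
      ∑ v' ∈ Finset.univ.filter (fun v' => R u v'), (gW R j v' : ℝ) := by
  rw [show gW R (j+1) v = ∑ u ∈ Finset.univ.filter (fun u => R u v),
      ∑ v' ∈ Finset.univ.filter (fun v' => R u v'), gW R j v' from rfl]
  push_cast
  rfl

set_option linter.unusedSectionVars false in
lemma entropy_ind (hisoL : ∀ u : U, ∃ v : V, R u v) (hisoR : ∀ v : V, ∃ u : U, R u v)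
    (hE0 : 0 < edgeCount R) (j : ℕ) :
    ∑ v, (degR R v : ℝ) * Real.log (degR R v)
      + j * ((edgeCount R : ℝ) * (2 * Real.log (edgeCount R)
          - Real.log ((Fintype.card U : ℝ) * (Fintype.card V : ℝ))))
      ≤ ∑ v, (degR R v : ℝ) * Real.log (gW R j v) := by
  obtain ⟨p, -⟩ := Finset.card_pos.1 (show 0 < (Finset.univ.filter
      fun p : U × V => R p.1 p.2).card from hE0)
  have hUne : Nonempty U := ⟨p.1⟩
  have hVne : Nonempty V := ⟨p.2⟩
  have hdR : ∀ v, (0:ℝ) < degR R v := fun v => by exact_mod_cast degR_pos R hisoR v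
  have hdL : ∀ u, (0:ℝ) < degL R u := fun u => by exact_mod_cast degL_pos R hisoL u
  have hg : ∀ j v, (0:ℝ) < (gW R j v : ℝ) := fun j v => by
    exact_mod_cast Nat.lt_of_lt_of_le Nat.zero_lt_one (one_le_gW R hisoR j v)
  have hE : (0:ℝ) < edgeCount R := by exact_mod_cast hE0
  have hsum_dR : ∑ v, (degR R v : ℝ) = (edgeCount R : ℝ) := by
    rw [← Nat.cast_sum, sum_degR]
  have hsum_dL : ∑ u, (degL R u : ℝ) = (edgeCount R : ℝ) := by
    rw [← Nat.cast_sum, sum_degL]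
  have hm : (0:ℝ) < Fintype.card U := by exact_mod_cast Fintype.card_pos
  have hn : (0:ℝ) < Fintype.card V := by exact_mod_cast Fintype.card_pos
  have hentR : (edgeCount R : ℝ) * Real.log (edgeCount R)
      - (edgeCount R : ℝ) * Real.log (Fintype.card V)
      ≤ ∑ v, (degR R v : ℝ) * Real.log (degR R v) := by
    have := sum_mul_log_self (fun v => (degR R v : ℝ)) hdR (by rw [hsum_dR]; exact hE)
    rwa [hsum_dR] at this
  have hentL : (edgeCount R : ℝ) * Real.log (edgeCount R)
      - (edgeCount R : ℝ) * Real.log (Fintype.card U)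
      ≤ ∑ u, (degL R u : ℝ) * Real.log (degL R u) := by
    have := sum_mul_log_self (fun u => (degL R u : ℝ)) hdL (by rw [hsum_dL]; exact hE)
    rwa [hsum_dL] at this
  have hlogmn : Real.log ((Fintype.card U : ℝ) * (Fintype.card V : ℝ))
      = Real.log (Fintype.card U) + Real.log (Fintype.card V) :=
    Real.log_mul hm.ne' hn.ne'
  induction j with
  | zero => simp [show gW R 0 = degR R from rfl]
  | succ j ih =>
    have hH : ∀ u : U, (0:ℝ) < ∑ v' ∈ Finset.univ.filter (fun v' => R u v'), (gW R j v' : ℝ) := by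
      intro u
      obtain ⟨v', hv'⟩ := hisoL u
      exact Finset.sum_pos' (fun i _ => (hg j i).le) ⟨v', by simp [hv'], hg j v'⟩
    -- step 1: per right vertex v
    have key1 : ∀ v, (degR R v : ℝ) * Real.log (degR R v)
        + ∑ u ∈ Finset.univ.filter (fun u => R u v),
            Real.log (∑ v' ∈ Finset.univ.filter (fun v' => R u v'), (gW R j v' : ℝ))
        ≤ (degR R v : ℝ) * Real.log (gW R (j+1) v) := by
      intro v
      have hne : (Finset.univ.filter (fun u => R u v)).Nonempty := by
        obtain ⟨u, hu⟩ := hisoR v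
        exact ⟨u, by simp [hu]⟩
      have h := sum_log_le (Finset.univ.filter (fun u => R u v))
        (fun u => ∑ v' ∈ Finset.univ.filter (fun v' => R u v'), (gW R j v' : ℝ))
        (fun u _ => hH u) hne
      rw [show ((Finset.univ.filter (fun u => R u v)).card : ℝ) = (degR R v : ℝ) from rfl] at h
      rw [show (∑ u ∈ Finset.univ.filter (fun u => R u v),
          ∑ v' ∈ Finset.univ.filter (fun v' => R u v'), (gW R j v' : ℝ)) = (gW R (j+1) v : ℝ) from
        (gW_cast_succ R j v).symm] at h
      linarith [h]
    -- step 2: per left vertex u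
    have key2 : ∀ u, (degL R u : ℝ) * Real.log (degL R u)
        + ∑ v' ∈ Finset.univ.filter (fun v' => R u v'), Real.log (gW R j v')
        ≤ (degL R u : ℝ) * Real.log (∑ v' ∈ Finset.univ.filter (fun v' => R u v'),
            (gW R j v' : ℝ)) := by
      intro u
      have hne : (Finset.univ.filter (fun v' => R u v')).Nonempty := by
        obtain ⟨v', hv'⟩ := hisoL u
        exact ⟨v', by simp [hv']⟩
      have h := sum_log_le (Finset.univ.filter (fun v' => R u v'))
        (fun v' => (gW R j v' : ℝ)) (fun v' _ => hg j v') hne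
      rw [show ((Finset.univ.filter (fun v' => R u v')).card : ℝ) = (degL R u : ℝ) from rfl] at h
      linarith [h]
    have s1 : ∑ v, ((degR R v : ℝ) * Real.log (degR R v)
        + ∑ u ∈ Finset.univ.filter (fun u => R u v),
            Real.log (∑ v' ∈ Finset.univ.filter (fun v' => R u v'), (gW R j v' : ℝ)))
        ≤ ∑ v, (degR R v : ℝ) * Real.log (gW R (j+1) v) :=
      Finset.sum_le_sum fun v _ => key1 v
    rw [Finset.sum_add_distrib, swapU R (fun u =>
      Real.log (∑ v' ∈ Finset.univ.filter (fun v' => R u v'), (gW R j v' : ℝ)))] at s1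
    have s2 : ∑ u, ((degL R u : ℝ) * Real.log (degL R u)
        + ∑ v' ∈ Finset.univ.filter (fun v' => R u v'), Real.log (gW R j v'))
        ≤ ∑ u, (degL R u : ℝ) * Real.log (∑ v' ∈ Finset.univ.filter (fun v' => R u v'),
            (gW R j v' : ℝ)) :=
      Finset.sum_le_sum fun u _ => key2 u
    rw [Finset.sum_add_distrib, swapV R (fun v => Real.log (gW R j v))] at s2
    have hEC : (edgeCount R : ℝ) * (2 * Real.log (edgeCount R)
        - Real.log ((Fintype.card U : ℝ) * (Fintype.card V : ℝ)))
        = 2 * ((edgeCount R : ℝ) * Real.log (edgeCount R))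
          - ((edgeCount R : ℝ) * Real.log (Fintype.card U)
            + (edgeCount R : ℝ) * Real.log (Fintype.card V)) := by
      rw [hlogmn]; ring
    have hsplit : ((j:ℝ) + 1) * ((edgeCount R : ℝ) * (2 * Real.log (edgeCount R)
        - Real.log ((Fintype.card U : ℝ) * (Fintype.card V : ℝ))))
        = (j:ℝ) * ((edgeCount R : ℝ) * (2 * Real.log (edgeCount R)
        - Real.log ((Fintype.card U : ℝ) * (Fintype.card V : ℝ))))
        + (edgeCount R : ℝ) * (2 * Real.log (edgeCount R)
        - Real.log ((Fintype.card U : ℝ) * (Fintype.card V : ℝ))) := by ring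
    push_cast
    push_cast at ih
    linarith [s1, s2, ih, hentL, hentR, hEC, hsplit]

end Entropy

section Final

variable {U V : Type*} [Fintype U] [Fintype V] (R : U → V → Prop) [∀ u v, Decidable (R u v)]

set_option linter.unusedSectionVars false in
lemma entropy_bound (hisoL : ∀ u : U, ∃ v : V, R u v) (hisoR : ∀ v : V, ∃ u : U, R u v)
    (hE0 : 0 < edgeCount R) (j : ℕ) :
    (edgeCount R : ℝ) ^ (2*j+1) / ((Fintype.card U : ℝ) * (Fintype.card V : ℝ)) ^ j
      ≤ ∑ v, (gW R j v : ℝ) := by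
  obtain ⟨p, -⟩ := Finset.card_pos.1 (show 0 < (Finset.univ.filter
      fun p : U × V => R p.1 p.2).card from hE0)
  have hUne : Nonempty U := ⟨p.1⟩
  have hVne : Nonempty V := ⟨p.2⟩
  have hdR : ∀ v, (0:ℝ) < degR R v := fun v => by exact_mod_cast degR_pos R hisoR v
  have hg : ∀ j v, (0:ℝ) < (gW R j v : ℝ) := fun j v => by
    exact_mod_cast Nat.lt_of_lt_of_le Nat.zero_lt_one (one_le_gW R hisoR j v)
  have hE : (0:ℝ) < edgeCount R := by exact_mod_cast hE0
  have hsum_dR : ∑ v, (degR R v : ℝ) = (edgeCount R : ℝ) := by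
    rw [← Nat.cast_sum, sum_degR]
  have hm : (0:ℝ) < Fintype.card U := by exact_mod_cast Fintype.card_pos
  have hn : (0:ℝ) < Fintype.card V := by exact_mod_cast Fintype.card_pos
  set W : ℝ := ∑ v, (gW R j v : ℝ) with hWdef
  have hW : 0 < W :=
    Finset.sum_pos (fun v _ => hg j v) Finset.univ_nonempty
  -- Gibbs' inequality step
  have hgibbs := jensen_log Finset.univ (fun v => (degR R v : ℝ))
    (fun v => (gW R j v : ℝ) / (degR R v : ℝ)) (fun v _ => (hdR v).le)
    (fun v _ => div_pos (hg j v) (hdR v)) (by rw [hsum_dR]; exact hE)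
  rw [hsum_dR] at hgibbs
  have e1 : ∑ v, (degR R v : ℝ) * ((gW R j v : ℝ) / (degR R v : ℝ)) = W := by
    rw [hWdef]
    exact Finset.sum_congr rfl fun v _ => by
      rw [mul_comm]; exact div_mul_cancel₀ _ (hdR v).ne'
  rw [e1] at hgibbs
  have e2 : ∑ v, (degR R v : ℝ) * Real.log ((gW R j v : ℝ) / (degR R v : ℝ))
      = ∑ v, (degR R v : ℝ) * Real.log (gW R j v)
        - ∑ v, (degR R v : ℝ) * Real.log (degR R v) := by
    rw [← Finset.sum_sub_distrib]
    exact Finset.sum_congr rfl fun v _ => by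
      rw [Real.log_div (hg j v).ne' (hdR v).ne']; ring
  rw [e2] at hgibbs
  have hind := entropy_ind R hisoL hisoR hE0 j
  have hlogW : Real.log (W / (edgeCount R : ℝ))
      = Real.log W - Real.log (edgeCount R) := Real.log_div hW.ne' hE.ne'
  rw [hlogW] at hgibbs
  -- deduce the log bound
  have hlog : (2*(j:ℝ)+1) * Real.log (edgeCount R)
      - (j:ℝ) * Real.log ((Fintype.card U : ℝ) * (Fintype.card V : ℝ)) ≤ Real.log W := by
    nlinarith [hgibbs, hind, hE]
  have hmn : (0:ℝ) < ((Fintype.card U : ℝ) * (Fintype.card V : ℝ)) ^ j :=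
    pow_pos (mul_pos hm hn) j
  have hEp : (0:ℝ) < (edgeCount R : ℝ) ^ (2*j+1) := pow_pos hE _
  have hlogq : Real.log ((edgeCount R : ℝ) ^ (2*j+1)
      / ((Fintype.card U : ℝ) * (Fintype.card V : ℝ)) ^ j)
      = (2*(j:ℝ)+1) * Real.log (edgeCount R)
        - (j:ℝ) * Real.log ((Fintype.card U : ℝ) * (Fintype.card V : ℝ)) := by
    rw [Real.log_div hEp.ne' hmn.ne', Real.log_pow, Real.log_pow]
    push_cast; ring
  calc (edgeCount R : ℝ) ^ (2*j+1) / ((Fintype.card U : ℝ) * (Fintype.card V : ℝ)) ^ j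
      = Real.exp (Real.log ((edgeCount R : ℝ) ^ (2*j+1)
          / ((Fintype.card U : ℝ) * (Fintype.card V : ℝ)) ^ j)) :=
        (Real.exp_log (div_pos hEp hmn)).symm
  _ ≤ Real.exp (Real.log W) := Real.exp_le_exp.mpr (by rw [hlogq]; exact hlog)
  _ = W := Real.exp_log hW

end Final

/-- Lower bound on the number of walks of odd length `k` in a finite bipartite graph
with sides of sizes `m, n ≥ 1` and no isolated vertices:
`|𝒫_k| ≥ |E(G)|^k / (m·n)^((k-1)/2)`. -/
theorem walks_cardinality_lower_bound_odd {U V : Type*} [Fintype U] [Fintype V]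
    (R : U → V → Prop) [∀ u v, Decidable (R u v)]
    (hU : 0 < Fintype.card U) (hV : 0 < Fintype.card V)
    (hisoL : ∀ u : U, ∃ v : V, R u v) (hisoR : ∀ v : V, ∃ u : U, R u v)
    (k : ℕ) (hk0 : 0 < k) (hk : Odd k) :
    (edgeCount R : ℝ) ^ k / ((Fintype.card U * Fintype.card V : ℕ) : ℝ) ^ ((k - 1) / 2)
      ≤ (walkCount R k : ℝ) := by
  obtain ⟨j, hj⟩ := hk
  have hjk : k = 2*j+1 := by omega
  have hdiv : (k - 1) / 2 = j := by omega
  have hE0 : 0 < edgeCount R := by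
    obtain ⟨u⟩ := Fintype.card_pos_iff.1 hU
    obtain ⟨v, hv⟩ := hisoL u
    exact Finset.card_pos.2 ⟨(u, v), by simp [hv]⟩
  have hcast : ((Fintype.card U * Fintype.card V : ℕ) : ℝ)
      = (Fintype.card U : ℝ) * (Fintype.card V : ℝ) := by push_cast; ring
  rw [hdiv, hjk, hcast]
  calc (edgeCount R : ℝ) ^ (2*j+1) / ((Fintype.card U : ℝ) * (Fintype.card V : ℝ)) ^ j
      ≤ ∑ v, (gW R j v : ℝ) := entropy_bound R hisoL hisoR hE0 j
  _ ≤ (walkCount R (2*j+1) : ℝ) := by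
      rw [← Nat.cast_sum]
      exact_mod_cast sum_gW_le_walkCount R j
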